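/- Let (X, A, μ) be a measure space, E ⊆ A closed under finite intersections, n ∈ ℕ, and P := {μ(·|E)^{⊗n} : E ∈ E, 0 < μ(E) < ∞}. Then C := σ(Eⁿ : E ∈ E) is complete for P: every C-measurable function h on Xⁿ, integrable under each member of P with expectation zero under each member, vanishes P-a.s. for every P ∈ P. -/

import Mathlib

open MeasureTheory
open scoped ENNReal

/-- A sub-σ-algebra `C` of `mX` is (Lehmann–Scheffé) complete for the model `M`:
every `C`-measurable real function, integrable with respect to every member of `M`
and with expectation `0` under every member, vanishes `P`-a.s. for every `P ∈ M`. -/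
def IsLSComplete {X : Type*} (mX : MeasurableSpace X) (C : MeasurableSpace X)
    (M : Set (@Measure X mX)) : Prop :=
  ∀ h : X → ℝ, Measurable[C] h → (∀ P ∈ M, Integrable h P) →
    (∀ P ∈ M, ∫ x, h x ∂P = 0) → ∀ P ∈ M, h =ᵐ[P] 0

/-- A sub-σ-algebra `C` of `mX` is sufficient for the model `M`: for every
`mX`-measurable set `A` there is a single `C`-measurable version of the conditional
probability of `A` given `C`, valid simultaneously for all `P ∈ M`. -/
def IsLSSufficient {X : Type*} (mX : MeasurableSpace X) (C : MeasurableSpace X)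
    (M : Set (@Measure X mX)) : Prop :=
  ∀ A : Set X, MeasurableSet[mX] A →
    ∃ g : X → ℝ, Measurable[C] g ∧
      ∀ P ∈ M, ∀ s : Set X, MeasurableSet[C] s →
        ∫ x in s, g x ∂P = (P (s ∩ A)).toReal

/-- The conditional law `μ(·|E) = μ(· ∩ E)/μ(E)`. -/
noncomputable def condLaw {X : Type*} [mX : MeasurableSpace X] (μ : Measure X)
    (E : Set X) : Measure X :=
  (μ E)⁻¹ • μ.restrict E

section Aux

variable {Y : Type*} [MeasurableSpace Y]

lemma condLaw_isProbability (μ : Measure Y) {E : Set Y} (h0 : μ E ≠ 0) (htop : μ E ≠ ⊤) :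
    IsProbabilityMeasure (condLaw μ E) := by
  constructor
  simp only [condLaw, Measure.smul_apply, Measure.restrict_apply_univ, smul_eq_mul]
  exact ENNReal.inv_mul_cancel h0 htop

lemma aux_pi_restrict_pi (n : ℕ) (Q : Measure Y) [SigmaFinite Q] {F : Set Y}
    (hF : MeasurableSet F) :
    (Measure.pi fun _ : Fin n => Q).restrict (Set.univ.pi fun _ => F)
      = Measure.pi fun _ : Fin n => Q.restrict F := by
  refine (Measure.pi_eq fun s hs => ?_).symm
  rw [Measure.restrict_apply (MeasurableSet.univ_pi hs), ← Set.pi_inter_distrib,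
    Measure.pi_pi]
  simp_rw [Measure.restrict_apply (hs _)]

lemma aux_pi_smul (n : ℕ) (c : ℝ≥0∞) (hc : c ≠ ⊤) (Q : Measure Y) [SigmaFinite Q] :
    (Measure.pi fun _ : Fin n => c • Q) = (c ^ n) • Measure.pi fun _ : Fin n => Q := by
  haveI : SigmaFinite (c • Q) := by
    rw [← ENNReal.coe_toNNReal hc, ← ENNReal.smul_def]
    infer_instance
  refine Measure.pi_eq fun s hs => ?_
  simp [Measure.pi_pi, Finset.prod_mul_distrib, Finset.prod_const, Finset.card_univ]

lemma condLaw_restrict (μ : Measure Y) {E F : Set Y} (hF : MeasurableSet F)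
    (h0 : μ (E ∩ F) ≠ 0) (htop : μ (E ∩ F) ≠ ⊤) :
    (condLaw μ E).restrict F = (μ (E ∩ F) * (μ E)⁻¹) • condLaw μ (E ∩ F) := by
  rw [condLaw, condLaw, Measure.restrict_smul, Measure.restrict_restrict hF,
    Set.inter_comm F E, smul_smul]
  congr 1
  rw [mul_comm (μ (E ∩ F)) (μ E)⁻¹, mul_assoc, ENNReal.mul_inv_cancel h0 htop, mul_one]

end Aux

/-- **Lemma (completeness part).** If `ℰ` is closed under finite intersections, then the
σ-algebra generated on `Xⁿ` by the products `Eⁿ`, `E ∈ ℰ`, is complete for the model of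
`n`-fold products of the conditional laws `μ(·|E)`, `E ∈ ℰ`, `0 < μ(E) < ∞`.
No σ-finiteness of `μ` is required. -/
theorem products_generate_complete_for_conditional_laws
    {X : Type*} [mX : MeasurableSpace X] (μ : Measure X)
    (ℰ : Set (Set X)) (hℰ : ∀ E ∈ ℰ, MeasurableSet E)
    (hcap : ∀ E ∈ ℰ, ∀ F ∈ ℰ, E ∩ F ∈ ℰ) (n : ℕ) :
    IsLSComplete MeasurableSpace.pi
      (MeasurableSpace.generateFrom
        {s : Set (Fin n → X) | ∃ E ∈ ℰ, s = Set.univ.pi fun _ : Fin n => E})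
      {P : Measure (Fin n → X) | ∃ E ∈ ℰ, 0 < μ E ∧ μ E < ⊤ ∧
        P = Measure.pi fun _ : Fin n => condLaw μ E} := by
  intro h hmeas hint hzero P hP
  obtain ⟨E, hE, h0, htop, rfl⟩ := hP
  have hPmem : (Measure.pi fun _ : Fin n => condLaw μ E) ∈ {P : Measure (Fin n → X) | ∃ E ∈ ℰ, 0 < μ E ∧ μ E < ⊤ ∧ P = Measure.pi fun _ : Fin n => condLaw μ E} := ⟨E, hE, h0, htop, rfl⟩
  have hCle : MeasurableSpace.generateFrom {s : Set (Fin n → X) | ∃ E ∈ ℰ, s = Set.univ.pi fun _ : Fin n => E} ≤ MeasurableSpace.pi := by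
    refine MeasurableSpace.generateFrom_le ?_
    rintro s ⟨F, hF, rfl⟩
    exact MeasurableSet.univ_pi fun _ => hℰ F hF
  haveI hprobE : IsProbabilityMeasure (condLaw μ E) :=
    condLaw_isProbability μ h0.ne' htop.ne
  haveI : ∀ i : Fin n, SigmaFinite ((fun _ : Fin n => condLaw μ E) i) := fun _ =>
    inferInstance
  haveI : IsProbabilityMeasure (Measure.pi fun _ : Fin n => condLaw μ E) :=
    inferInstance
  have hpiS : IsPiSystem {s : Set (Fin n → X) | ∃ E ∈ ℰ, s = Set.univ.pi fun _ : Fin n => E} := by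
    rintro s ⟨F, hF, rfl⟩ t ⟨G, hG, rfl⟩ -
    exact ⟨F ∩ G, hcap F hF G hG, by rw [← Set.pi_inter_distrib]⟩
  have hintP : Integrable h (Measure.pi fun _ : Fin n => condLaw μ E) := hint _ hPmem
  -- key claim: the integral of h vanishes on every C-measurable set
  have key : ∀ s : Set (Fin n → X), MeasurableSet[MeasurableSpace.generateFrom {s : Set (Fin n → X) | ∃ E ∈ ℰ, s = Set.univ.pi fun _ : Fin n => E}] s →
      ∫ x in s, h x ∂(Measure.pi fun _ : Fin n => condLaw μ E) = 0 := by
    intro s hs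
    refine MeasurableSpace.induction_on_inter (m := MeasurableSpace.generateFrom {s : Set (Fin n → X) | ∃ E ∈ ℰ, s = Set.univ.pi fun _ : Fin n => E}) (C := fun s _ =>
      ∫ x in s, h x ∂(Measure.pi fun _ : Fin n => condLaw μ E) = 0) rfl hpiS ?_ ?_ ?_ ?_ s hs
    · simp
    · rintro t ⟨F, hF, rfl⟩
      rcases Nat.eq_zero_or_pos n with hn | hn
      · have huniv : (Set.univ.pi fun _ : Fin n => F) = Set.univ := by
          subst hn
          ext x
          simp [Set.mem_pi]
        rw [huniv, Measure.restrict_univ]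
        exact hzero _ hPmem
      by_cases hG0 : μ (E ∩ F) = 0
      · have hzeroset : (Measure.pi fun _ : Fin n => condLaw μ E)
            (Set.univ.pi fun _ : Fin n => F) = 0 := by
          rw [Measure.pi_pi]
          have : condLaw μ E F = 0 := by
            simp only [condLaw, Measure.smul_apply, smul_eq_mul,
              Measure.restrict_apply (hℰ F hF), Set.inter_comm F E, hG0, mul_zero]
          rw [this]
          simp [Finset.prod_const, pow_eq_zero_iff, hn.ne']
        rw [Measure.restrict_eq_zero.mpr hzeroset]
        simp
      · -- positive case: E ∩ F ∈ ℰ with positive finite measure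
        have hEF : E ∩ F ∈ ℰ := hcap E hE F hF
        have hEFtop : μ (E ∩ F) < ⊤ :=
          lt_of_le_of_lt (measure_mono Set.inter_subset_left) htop
        haveI hprobG : IsProbabilityMeasure (condLaw μ (E ∩ F)) :=
          condLaw_isProbability μ hG0 hEFtop.ne
        have hQmem : (Measure.pi fun _ : Fin n => condLaw μ (E ∩ F)) ∈ {P : Measure (Fin n → X) | ∃ E ∈ ℰ, 0 < μ E ∧ μ E < ⊤ ∧ P = Measure.pi fun _ : Fin n => condLaw μ E} :=
          ⟨E ∩ F, hEF, pos_iff_ne_zero.mpr hG0, hEFtop, rfl⟩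
        have hc : μ (E ∩ F) * (μ E)⁻¹ ≠ ⊤ :=
          ENNReal.mul_ne_top hEFtop.ne (ENNReal.inv_ne_top.mpr h0.ne')
        calc ∫ x in Set.univ.pi fun _ : Fin n => F, h x
              ∂(Measure.pi fun _ : Fin n => condLaw μ E)
            = ∫ x, h x ∂((Measure.pi fun _ : Fin n => condLaw μ E).restrict
                (Set.univ.pi fun _ : Fin n => F)) := rfl
          _ = ∫ x, h x ∂(Measure.pi fun _ : Fin n => (condLaw μ E).restrict F) := by
              rw [aux_pi_restrict_pi n (condLaw μ E) (hℰ F hF)]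
          _ = ∫ x, h x ∂(Measure.pi fun _ : Fin n =>
                (μ (E ∩ F) * (μ E)⁻¹) • condLaw μ (E ∩ F)) := by
              rw [condLaw_restrict μ (hℰ F hF) hG0 hEFtop.ne]
          _ = ∫ x, h x ∂(((μ (E ∩ F) * (μ E)⁻¹) ^ n) •
                Measure.pi fun _ : Fin n => condLaw μ (E ∩ F)) := by
              rw [aux_pi_smul n _ hc]
          _ = ((μ (E ∩ F) * (μ E)⁻¹) ^ n).toReal •
                ∫ x, h x ∂(Measure.pi fun _ : Fin n => condLaw μ (E ∩ F)) :=
              integral_smul_measure _ _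
          _ = 0 := by rw [hzero _ hQmem, smul_zero]
    · intro t htC hti
      have ht : MeasurableSet[MeasurableSpace.pi] t := hCle _ htC
      have hadd := integral_add_compl ht hintP
      rw [hti, zero_add] at hadd
      rw [hadd]
      exact hzero _ hPmem
    · intro f hdisj hfC hfi
      have hfm : ∀ i, MeasurableSet[MeasurableSpace.pi] (f i) := fun i => hCle _ (hfC i)
      rw [integral_iUnion hfm hdisj hintP.integrableOn]
      simp [hfi]
  -- conclude via the trimmed measure
  have hsm : StronglyMeasurable[MeasurableSpace.generateFrom {s : Set (Fin n → X) | ∃ E ∈ ℰ, s = Set.univ.pi fun _ : Fin n => E}] h := hmeas.stronglyMeasurable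
  haveI : IsFiniteMeasure ((Measure.pi fun _ : Fin n => condLaw μ E).trim hCle) :=
    isFiniteMeasure_trim hCle
  have hintt : Integrable h ((Measure.pi fun _ : Fin n => condLaw μ E).trim hCle) :=
    hintP.trim hCle hsm
  have htrim : h =ᵐ[(Measure.pi fun _ : Fin n => condLaw μ E).trim hCle] 0 := by
    refine hintt.ae_eq_zero_of_forall_setIntegral_eq_zero fun s hsC _ => ?_
    rw [← setIntegral_trim hCle hsm hsC]
    exact key s hsC
  exact ae_eq_of_ae_eq_trim htrim
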